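/- arXiv:2204.01049 — 3 statements merged into one kernel-verified Lean document; each statement's English description precedes it below -/
import Mathlib

section
/- Suppose the training error functions L_X(W) = (1/n)∑_{i=1}^n ℓ(W, x_i) and L_{X'}(W) = (1/(n-1))∑_{i≠j} ℓ(W, x_i) are built from a loss ℓ(·, x) that is convex and ρ-Lipschitz in W for every x, and let the regularized objectives F(W) = L_X(W) + (λ/2)‖W‖² and F'(W) = L_{X'}(W) + (λ/2)‖W‖² have minimizers W_X and W_{X'} respectively, where X' is X with the j-th sample removed. Then ‖W_{X'} - W_X‖ ≤ 2ρ/(λn), and moreover ℓ(W_{X'}, x_j) - ℓ(W_X, x_j) ≤ 2ρ²/(λn). -/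
open Finset

/-- A finite sum of convex functions is convex. -/
lemma convexOn_finset_sum' {E : Type*} [NormedAddCommGroup E] [NormedSpace ℝ E]
    {ι : Type*} (t : Finset ι) (f : ι → E → ℝ)
    (h : ∀ i ∈ t, ConvexOn ℝ Set.univ (f i)) :
    ConvexOn ℝ Set.univ (fun W => ∑ i ∈ t, f i W) := by
  classical
  induction t using Finset.induction with
  | empty => simpa using convexOn_const (0:ℝ) convex_univ
  | @insert a s ha ih =>
    simp only [Finset.sum_insert ha]
    exact (h a (Finset.mem_insert_self a s)).add
      (ih fun i hi => h i (Finset.mem_insert_of_mem hi))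

/-- Strong convexity at a minimizer gives a quadratic growth bound. -/
lemma strong_min {E : Type*} [NormedAddCommGroup E] [InnerProductSpace ℝ E]
    {m : ℝ} {f : E → ℝ} (hf : StrongConvexOn Set.univ m f)
    {x0 : E} (hx0 : ∀ w, f x0 ≤ f w) (w : E) :
    f x0 + m / 2 * ‖w - x0‖ ^ 2 ≤ f w := by
  set C := ‖w - x0‖ ^ 2 with hC
  have key : ∀ t : ℝ, t ∈ Set.Ioo (0:ℝ) 1 → m / 2 * (1 - t) * C ≤ f w - f x0 := by
    intro t ht
    have h1 : f (t • w + (1 - t) • x0) ≤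
        t * f w + (1 - t) * f x0 - t * (1 - t) * (m / 2 * C) := by
      simpa using hf.2 (Set.mem_univ w) (Set.mem_univ x0) ht.1.le (by linarith [ht.2])
        (by ring)
    have h2 := hx0 (t • w + (1 - t) • x0)
    have ht0 : 0 < t := ht.1
    nlinarith [h1, h2]
  have hlim : Filter.Tendsto (fun t : ℝ => m / 2 * (1 - t) * C) (nhdsWithin 0 (Set.Ioi 0))
      (nhds (m / 2 * (1 - 0) * C)) := by
    apply Filter.Tendsto.mono_left _ nhdsWithin_le_nhds
    exact (Continuous.tendsto (by continuity) 0)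
  have := le_of_tendsto hlim (Filter.eventually_iff_exists_mem.2
    ⟨Set.Ioo 0 1, Ioo_mem_nhdsGT_of_mem (by constructor <;> norm_num), key⟩)
  simpa using by linarith [this]

theorem remove_one_sensitivity_and_stability
    (d n : ℕ) (hn : 2 ≤ n) (lam ρ : ℝ) (hlam : 0 < lam) (hρ : 0 ≤ ρ)
    {X : Type*} (x : Fin n → X) (j : Fin n)
    (ℓ : EuclideanSpace ℝ (Fin d) → X → ℝ)
    (hconv : ∀ s : X, ConvexOn ℝ Set.univ (fun W => ℓ W s))
    (hlip : ∀ s : X, ∀ u v, |ℓ u s - ℓ v s| ≤ ρ * ‖u - v‖)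
    (F F' : EuclideanSpace ℝ (Fin d) → ℝ)
    (hF : ∀ W, F W = ((1 : ℝ) / n) * ∑ i, ℓ W (x i) + lam / 2 * ‖W‖ ^ 2)
    (hF' : ∀ W, F' W =
      ((1 : ℝ) / (n - 1)) * ∑ i ∈ Finset.univ.erase j, ℓ W (x i) + lam / 2 * ‖W‖ ^ 2)
    (WX WX' : EuclideanSpace ℝ (Fin d))
    (hWX : ∀ w, F WX ≤ F w) (hWX' : ∀ w, F' WX' ≤ F' w) :
    ‖WX' - WX‖ ≤ 2 * ρ / (lam * n) ∧
      ℓ WX' (x j) - ℓ WX (x j) ≤ 2 * ρ ^ 2 / (lam * n) := by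
  have hn1 : (1:ℝ) ≤ (n:ℝ) - 1 := by
    have : (2:ℝ) ≤ (n:ℝ) := by exact_mod_cast hn
    linarith
  have hnpos : (0:ℝ) < (n:ℝ) := by linarith
  have hn1pos : (0:ℝ) < (n:ℝ) - 1 := by linarith
  -- strong convexity of F and F'
  have hSC : StrongConvexOn Set.univ lam F := by
    rw [strongConvexOn_iff_convex]
    have : ConvexOn ℝ Set.univ (fun W => ((1:ℝ)/n) * ∑ i, ℓ W (x i)) := by
      simpa [smul_eq_mul] using
        (convexOn_finset_sum' Finset.univ (fun i W => ℓ W (x i))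
          (fun i _ => hconv (x i))).smul (by positivity : (0:ℝ) ≤ 1/n)
    exact this.congr fun w _ => by simp [hF w]
  have hSC' : StrongConvexOn Set.univ lam F' := by
    rw [strongConvexOn_iff_convex]
    have : ConvexOn ℝ Set.univ
        (fun W => ((1:ℝ)/((n:ℝ)-1)) * ∑ i ∈ Finset.univ.erase j, ℓ W (x i)) := by
      simpa [smul_eq_mul] using
        (convexOn_finset_sum' (Finset.univ.erase j) (fun i W => ℓ W (x i))
          (fun i _ => hconv (x i))).smul (by positivity : (0:ℝ) ≤ 1/((n:ℝ)-1))
    exact this.congr fun w _ => by simp [hF' w]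
  set Δ := ‖WX' - WX‖ with hΔ
  have hΔ0 : 0 ≤ Δ := norm_nonneg _
  have k1 : F WX + lam / 2 * Δ ^ 2 ≤ F WX' := strong_min hSC hWX WX'
  have k2 : F' WX' + lam / 2 * Δ ^ 2 ≤ F' WX := by
    have := strong_min hSC' hWX' WX
    rwa [norm_sub_rev] at this
  -- relation between F and F'
  have hsplit : ∀ W, (∑ i, ℓ W (x i)) = ℓ W (x j) + ∑ i ∈ Finset.univ.erase j, ℓ W (x i) := by
    intro W
    rw [← Finset.add_sum_erase _ _ (Finset.mem_univ j)]
  -- Lipschitz bounds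
  have lip_j : |ℓ WX' (x j) - ℓ WX (x j)| ≤ ρ * Δ := hlip (x j) WX' WX
  have lip_S : |(∑ i ∈ Finset.univ.erase j, ℓ WX' (x i))
      - ∑ i ∈ Finset.univ.erase j, ℓ WX (x i)| ≤ ((n:ℝ) - 1) * (ρ * Δ) := by
    rw [← Finset.sum_sub_distrib]
    calc |∑ i ∈ Finset.univ.erase j, (ℓ WX' (x i) - ℓ WX (x i))|
        ≤ ∑ i ∈ Finset.univ.erase j, |ℓ WX' (x i) - ℓ WX (x i)| :=
          Finset.abs_sum_le_sum_abs _ _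
      _ ≤ ∑ _i ∈ Finset.univ.erase j, ρ * Δ :=
          Finset.sum_le_sum (fun i _ => hlip (x i) WX' WX)
      _ = ((n:ℝ) - 1) * (ρ * Δ) := by
          rw [Finset.sum_const, Finset.card_erase_of_mem (Finset.mem_univ j),
            Finset.card_univ, Fintype.card_fin, nsmul_eq_mul,
            Nat.cast_sub (by omega : 1 ≤ n)]
          push_cast; ring
  -- combine
  have hsum : lam * Δ ^ 2 ≤ (2 * ρ / n) * Δ := by
    have e1 : F WX' - F' WX' =
        (1/(n:ℝ)) * ℓ WX' (x j) - (1/((n:ℝ)*((n:ℝ)-1))) *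
          ∑ i ∈ Finset.univ.erase j, ℓ WX' (x i) := by
      rw [hF WX', hF' WX', hsplit WX']
      field_simp
      ring
    have e2 : F' WX - F WX =
        - ((1/(n:ℝ)) * ℓ WX (x j)) + (1/((n:ℝ)*((n:ℝ)-1))) *
          ∑ i ∈ Finset.univ.erase j, ℓ WX (x i) := by
      rw [hF WX, hF' WX, hsplit WX]
      field_simp
      ring
    have hcomb : lam * Δ ^ 2 ≤ (F WX' - F' WX') + (F' WX - F WX) := by linarith
    rw [e1, e2] at hcomb
    have b1 : ℓ WX' (x j) - ℓ WX (x j) ≤ ρ * Δ := (abs_le.mp lip_j).2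
    have b2 : (∑ i ∈ Finset.univ.erase j, ℓ WX (x i))
        - ∑ i ∈ Finset.univ.erase j, ℓ WX' (x i) ≤ ((n:ℝ) - 1) * (ρ * Δ) := by
      have := (abs_le.mp lip_S).1; linarith
    have hninv : (0:ℝ) < 1/((n:ℝ)*((n:ℝ)-1)) := by positivity
    have hmul2 : (1/((n:ℝ)*((n:ℝ)-1))) *
        ((∑ i ∈ Finset.univ.erase j, ℓ WX (x i))
          - ∑ i ∈ Finset.univ.erase j, ℓ WX' (x i)) ≤
        (1/((n:ℝ)*((n:ℝ)-1))) * (((n:ℝ) - 1) * (ρ * Δ)) :=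
      mul_le_mul_of_nonneg_left b2 hninv.le
    have heq : (1/((n:ℝ)*((n:ℝ)-1))) * (((n:ℝ) - 1) * (ρ * Δ)) = (1/(n:ℝ)) * (ρ * Δ) := by
      field_simp
    have hmul1 : (1/(n:ℝ)) * (ℓ WX' (x j) - ℓ WX (x j)) ≤ (1/(n:ℝ)) * (ρ * Δ) :=
      mul_le_mul_of_nonneg_left b1 (by positivity)
    have : lam * Δ ^ 2 ≤ (1/(n:ℝ)) * (ρ * Δ) + (1/(n:ℝ)) * (ρ * Δ) := by
      rw [heq] at hmul2
      nlinarith [hcomb, hmul1, hmul2]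
    calc lam * Δ ^ 2 ≤ (1/(n:ℝ)) * (ρ * Δ) + (1/(n:ℝ)) * (ρ * Δ) := this
      _ = (2 * ρ / n) * Δ := by ring
  have hΔbound : Δ ≤ 2 * ρ / (lam * n) := by
    rcases eq_or_lt_of_le hΔ0 with h0 | hpos
    · rw [← h0]; positivity
    · have h1 : lam * Δ ≤ 2 * ρ / n := by nlinarith
      rw [le_div_iff₀ hnpos] at h1
      rw [le_div_iff₀ (by positivity : (0:ℝ) < lam * n)]
      calc Δ * (lam * n) = lam * Δ * n := by ring
        _ ≤ 2 * ρ := h1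
  refine ⟨hΔbound, ?_⟩
  have b1 : ℓ WX' (x j) - ℓ WX (x j) ≤ ρ * Δ := (abs_le.mp lip_j).2
  calc ℓ WX' (x j) - ℓ WX (x j) ≤ ρ * Δ := b1
    _ ≤ ρ * (2 * ρ / (lam * n)) := mul_le_mul_of_nonneg_left hΔbound hρ
    _ = 2 * ρ ^ 2 / (lam * n) := by ring
end

section
/- Let z, z' ∈ ℝ^C with |z_j - z'_j| ≤ Δ for all j, and let p_v = exp(z_v)/∑_{j=1}^C exp(z_j) and p'_v = exp(z'_v)/∑_{j=1}^C exp(z'_j) be the softmax probabilities of coordinate v. Then |p'_v - p_v| ≤ min(exp(2Δ) - 1, 1). -/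
private lemma softmax_dir
    (C : ℕ) (hC : 1 ≤ C) (Δ : ℝ) (hΔ : 0 ≤ Δ)
    (z z' : Fin C → ℝ) (hz : ∀ j, |z j - z' j| ≤ Δ) (v : Fin C) :
    Real.exp (z' v) / (∑ j, Real.exp (z' j)) -
      Real.exp (z v) / (∑ j, Real.exp (z j)) ≤ Real.exp (2 * Δ) - 1 := by
  have hne : Nonempty (Fin C) := ⟨⟨0, hC⟩⟩
  have hS : 0 < ∑ j, Real.exp (z j) :=
    Finset.sum_pos (fun j _ => Real.exp_pos _) Finset.univ_nonempty
  have hS' : 0 < ∑ j, Real.exp (z' j) :=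
    Finset.sum_pos (fun j _ => Real.exp_pos _) Finset.univ_nonempty
  have hp1 : Real.exp (z v) / (∑ j, Real.exp (z j)) ≤ 1 := by
    rw [div_le_one hS]
    exact Finset.single_le_sum (fun j _ => (Real.exp_pos _).le) (Finset.mem_univ v)
  -- numerator bound
  have hnum : Real.exp (z' v) ≤ Real.exp Δ * Real.exp (z v) := by
    rw [← Real.exp_add]
    apply Real.exp_le_exp.2
    have := abs_le.1 (hz v)
    linarith [this.1]
  -- denominator bound
  have hden : Real.exp (-Δ) * (∑ j, Real.exp (z j)) ≤ ∑ j, Real.exp (z' j) := by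
    rw [Finset.mul_sum]
    apply Finset.sum_le_sum
    intro j _
    rw [← Real.exp_add]
    apply Real.exp_le_exp.2
    have := abs_le.1 (hz j)
    linarith [this.2]
  have key : Real.exp (z' v) / (∑ j, Real.exp (z' j)) ≤
      Real.exp (2 * Δ) * (Real.exp (z v) / (∑ j, Real.exp (z j))) := by
    have h1 : Real.exp (z' v) / (∑ j, Real.exp (z' j)) ≤
        (Real.exp Δ * Real.exp (z v)) / (Real.exp (-Δ) * (∑ j, Real.exp (z j))) :=
      div_le_div₀ (by positivity) hnum (by positivity) hden
    calc Real.exp (z' v) / (∑ j, Real.exp (z' j)) ≤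
        (Real.exp Δ * Real.exp (z v)) / (Real.exp (-Δ) * (∑ j, Real.exp (z j))) := h1
      _ = Real.exp (2 * Δ) * (Real.exp (z v) / (∑ j, Real.exp (z j))) := by
          rw [Real.exp_neg]
          field_simp
          have e : Real.exp (2*Δ) = Real.exp Δ * Real.exp Δ := by
            rw [← Real.exp_add]; ring_nf
          rw [e]
          ring
  have h2 : 1 ≤ Real.exp (2 * Δ) := Real.one_le_exp (by linarith)
  nlinarith [div_pos (Real.exp_pos (z v)) hS]

theorem softmax_sensitivity
    (C : ℕ) (hC : 1 ≤ C) (Δ : ℝ) (hΔ : 0 ≤ Δ)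
    (z z' : Fin C → ℝ) (hz : ∀ j, |z j - z' j| ≤ Δ) (v : Fin C) :
    |Real.exp (z' v) / (∑ j, Real.exp (z' j)) -
      Real.exp (z v) / (∑ j, Real.exp (z j))| ≤
        min (Real.exp (2 * Δ) - 1) 1 := by
  have hne : Nonempty (Fin C) := ⟨⟨0, hC⟩⟩
  have hS : 0 < ∑ j, Real.exp (z j) :=
    Finset.sum_pos (fun j _ => Real.exp_pos _) Finset.univ_nonempty
  have hS' : 0 < ∑ j, Real.exp (z' j) :=
    Finset.sum_pos (fun j _ => Real.exp_pos _) Finset.univ_nonempty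
  have hp1 : Real.exp (z v) / (∑ j, Real.exp (z j)) ≤ 1 := by
    rw [div_le_one hS]
    exact Finset.single_le_sum (fun j _ => (Real.exp_pos _).le) (Finset.mem_univ v)
  have hp1' : Real.exp (z' v) / (∑ j, Real.exp (z' j)) ≤ 1 := by
    rw [div_le_one hS']
    exact Finset.single_le_sum (fun j _ => (Real.exp_pos _).le) (Finset.mem_univ v)
  have hp0 : 0 ≤ Real.exp (z v) / (∑ j, Real.exp (z j)) := by positivity
  have hp0' : 0 ≤ Real.exp (z' v) / (∑ j, Real.exp (z' j)) := by positivity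
  have hz' : ∀ j, |z' j - z j| ≤ Δ := fun j => by rw [abs_sub_comm]; exact hz j
  have d1 := softmax_dir C hC Δ hΔ z z' hz v
  have d2 := softmax_dir C hC Δ hΔ z' z hz' v
  rw [le_min_iff]
  constructor
  · rw [abs_le]; constructor <;> linarith
  · rw [abs_le]; constructor <;> linarith
end

section
/- The exponential mechanism satisfies ε-DP: if q(X, r) is a score function with |q(X, r) - q(X', r)| ≤ Δq for all neighbouring X, X' and all candidates r in a finite set R, then the mechanism that outputs r with probability exp(ε·q(X,r)/(2Δq)) / ∑_{r'∈R} exp(ε·q(X,r')/(2Δq)) satisfies: for all neighbouring X, X' and all r, Pr[output r on X] ≤ exp(ε)·Pr[output r on X']. -/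
theorem exponential_mechanism_dp
    {D R : Type*} [Fintype R] [Nonempty R]
    (Neighbor : D → D → Prop) (ε Δq : ℝ) (hε : 0 < ε) (hΔq : 0 < Δq)
    (q : D → R → ℝ)
    (hsens : ∀ X X', Neighbor X X' → ∀ r, |q X r - q X' r| ≤ Δq) :
    ∀ X X', Neighbor X X' → ∀ r : R,
      Real.exp (ε * q X r / (2 * Δq)) / (∑ r' : R, Real.exp (ε * q X r' / (2 * Δq))) ≤
        Real.exp ε *
          (Real.exp (ε * q X' r / (2 * Δq)) /
            (∑ r' : R, Real.exp (ε * q X' r' / (2 * Δq)))) := by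
  intro X X' hN r
  have h2Δq : (0:ℝ) < 2 * Δq := by linarith
  set f : R → ℝ := fun s => Real.exp (ε * q X s / (2 * Δq)) with hf
  set g : R → ℝ := fun s => Real.exp (ε * q X' s / (2 * Δq)) with hg
  have hSpos : 0 < ∑ r' : R, f r' :=
    Finset.sum_pos (fun i _ => Real.exp_pos _) Finset.univ_nonempty
  have hS'pos : 0 < ∑ r' : R, g r' :=
    Finset.sum_pos (fun i _ => Real.exp_pos _) Finset.univ_nonempty
  have key : ∀ s : R, f s ≤ Real.exp (ε/2) * g s := by
    intro s
    have h1 : q X s - q X' s ≤ Δq := (abs_le.mp (hsens X X' hN s)).2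
    rw [hf, hg]
    simp only [← Real.exp_add]
    apply Real.exp_le_exp.mpr
    rw [div_le_iff₀ h2Δq, add_mul, div_mul_cancel₀ _ h2Δq.ne']
    nlinarith
  have key' : ∀ s : R, g s ≤ Real.exp (ε/2) * f s := by
    intro s
    have h1 : q X' s - q X s ≤ Δq := by
      have := (abs_le.mp (hsens X X' hN s)).1; linarith
    rw [hf, hg]
    simp only [← Real.exp_add]
    apply Real.exp_le_exp.mpr
    rw [div_le_iff₀ h2Δq, add_mul, div_mul_cancel₀ _ h2Δq.ne']
    nlinarith
  have hsum : (∑ r' : R, g r') ≤ Real.exp (ε/2) * ∑ r' : R, f r' := by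
    rw [Finset.mul_sum]
    exact Finset.sum_le_sum fun i _ => key' i
  have hεe : Real.exp ε = Real.exp (ε/2) * Real.exp (ε/2) := by
    rw [← Real.exp_add]; ring_nf
  rw [div_le_iff₀ hSpos, hεe]
  have hgr : g r ≤ g r / (∑ r' : R, g r') * (Real.exp (ε/2) * ∑ r' : R, f r') := by
    have h0 : g r = g r / (∑ r' : R, g r') * (∑ r' : R, g r') :=
      (div_mul_cancel₀ _ (ne_of_gt hS'pos)).symm
    calc g r = g r / (∑ r' : R, g r') * (∑ r' : R, g r') := h0
      _ ≤ g r / (∑ r' : R, g r') * (Real.exp (ε/2) * ∑ r' : R, f r') := by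
          apply mul_le_mul_of_nonneg_left hsum (by positivity)
  calc f r ≤ Real.exp (ε/2) * g r := key r
    _ ≤ Real.exp (ε/2) * (g r / (∑ r' : R, g r') * (Real.exp (ε/2) * ∑ r' : R, f r')) :=
        mul_le_mul_of_nonneg_left hgr (by positivity)
    _ = Real.exp (ε/2) * Real.exp (ε/2) * (g r / (∑ r' : R, g r')) * (∑ r' : R, f r') := by ring
end
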